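/- Let a and b be positive integers with gcd(a,b) = 1, and let λ be a complex number with λ ≠ 0, λ ≠ 1 and λ^b = 1. Then ∑_{n ∈ NR(a,b)} λⁿ n = λ/(λ − 1)² + (a − 1)a b/(2(λ^a − 1)) − a² λ^a/(λ^a − 1)². -/

import Mathlib

open Finset

private lemma wssGeomA (μ : ℂ) (n : ℕ) :
    (∑ x ∈ range n, (x : ℂ) * μ ^ x) * (μ - 1) = n * μ ^ n - μ * ∑ x ∈ range n, μ ^ x := by
  have h : ∀ x : ℕ, (x : ℂ) * μ ^ x * (μ - 1)
      = ((((x+1:ℕ)):ℂ) * μ ^ (x+1) - (x : ℂ) * μ ^ x) - μ * μ ^ x := by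
    intro x; push_cast; ring
  rw [Finset.sum_mul]
  calc ∑ x ∈ range n, (x : ℂ) * μ ^ x * (μ - 1)
      = ∑ x ∈ range n, ((((x+1:ℕ)):ℂ) * μ ^ (x+1) - (x : ℂ) * μ ^ x - μ * μ ^ x) := by
        exact Finset.sum_congr rfl fun x _ => h x
    _ = (∑ x ∈ range n, ((((x+1:ℕ)):ℂ) * μ ^ (x+1) - (x : ℂ) * μ ^ x))
        - ∑ x ∈ range n, μ * μ ^ x := Finset.sum_sub_distrib _ _
    _ = ((((n:ℕ)):ℂ) * μ ^ n - ((0:ℕ):ℂ) * μ ^ 0) - μ * ∑ x ∈ range n, μ ^ x := by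
        rw [Finset.sum_range_sub (fun x => (x : ℂ) * μ ^ x), Finset.mul_sum]
    _ = _ := by ring

private lemma wssGeomB (μ : ℂ) (n : ℕ) :
    (∑ x ∈ range n, (x : ℂ)^2 * μ ^ x) * (μ - 1)
      = (n:ℂ)^2 * μ ^ n - 2 * μ * (∑ x ∈ range n, (x:ℂ) * μ ^ x) - μ * ∑ x ∈ range n, μ ^ x := by
  have h : ∀ x : ℕ, (x : ℂ)^2 * μ ^ x * (μ - 1)
      = (((((x+1:ℕ)):ℂ))^2 * μ ^ (x+1) - (x : ℂ)^2 * μ ^ x)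
        - (2 * (x:ℂ) + 1) * (μ * μ ^ x) := by
    intro x; push_cast; ring
  rw [Finset.sum_mul]
  calc ∑ x ∈ range n, (x : ℂ)^2 * μ ^ x * (μ - 1)
      = ∑ x ∈ range n, ((((((x+1:ℕ)):ℂ))^2 * μ ^ (x+1) - (x : ℂ)^2 * μ ^ x)
          - (2 * (x:ℂ) + 1) * (μ * μ ^ x)) := Finset.sum_congr rfl fun x _ => h x
    _ = (∑ x ∈ range n, (((((x+1:ℕ)):ℂ))^2 * μ ^ (x+1) - (x : ℂ)^2 * μ ^ x))
        - ∑ x ∈ range n, (2 * (x:ℂ) + 1) * (μ * μ ^ x) := Finset.sum_sub_distrib _ _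
    _ = ((((n:ℕ)):ℂ)^2 * μ ^ n - (((0:ℕ)):ℂ)^2 * μ ^ 0)
        - (2 * μ * (∑ x ∈ range n, (x:ℂ) * μ ^ x) + μ * ∑ x ∈ range n, μ ^ x) := by
        rw [Finset.sum_range_sub (fun x => (x : ℂ)^2 * μ ^ x)]
        congr 1
        rw [Finset.mul_sum, Finset.mul_sum, ← Finset.sum_add_distrib]
        exact Finset.sum_congr rfl fun x _ => by ring
    _ = _ := by ring

section
variable {μ : ℂ} {n : ℕ} (hμ1 : μ ≠ 1) (hμn : μ ^ n = 1)
include hμ1 hμn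

private lemma wssSumE : ∑ x ∈ range n, μ ^ x = 0 := by
  have h := geom_sum_mul μ n
  rw [hμn, sub_self] at h
  rcases mul_eq_zero.1 h with h | h
  · exact h
  · exact (hμ1 (sub_eq_zero.1 h)).elim

private lemma wssSumP : ∑ x ∈ range n, (x : ℂ) * μ ^ x = n / (μ - 1) := by
  have hne : μ - 1 ≠ 0 := sub_ne_zero.2 hμ1
  have h := wssGeomA μ n
  rw [hμn, wssSumE hμ1 hμn, mul_zero, sub_zero, mul_one] at h
  field_simp [h]
  exact h

private lemma wssSumQ : ∑ x ∈ range n, (x : ℂ)^2 * μ ^ x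
    = (n:ℂ)^2 / (μ - 1) - 2 * μ * n / (μ - 1)^2 := by
  have hne : μ - 1 ≠ 0 := sub_ne_zero.2 hμ1
  have h := wssGeomB μ n
  rw [hμn, wssSumE hμ1 hμn, wssSumP hμ1 hμn, mul_zero, sub_zero, mul_one] at h
  field_simp at h ⊢
  linear_combination h
end

private lemma wssGauss (n : ℕ) : ∑ z ∈ range n, (z : ℂ) = n * (n - 1) / 2 := by
  induction n with
  | zero => simp
  | succ m ih => rw [Finset.sum_range_succ, ih]; push_cast; ring

private lemma wssReindex (a b : ℕ) (hb : 1 < b) (hgcd : Nat.gcd a b = 1) (F : ℕ → ℂ) :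
    ∑ x ∈ Ico 1 b, F (a * x % b) = ∑ r ∈ Ico 1 b, F r := by
  obtain ⟨c, -, hc⟩ := Nat.exists_mul_mod_eq_one_of_coprime hgcd hb
  have hb0 : 0 < b := by omega
  have hac : a * c ≡ 1 [MOD b] := by
    unfold Nat.ModEq; rw [hc, Nat.mod_eq_of_lt hb]
  have hmemi : ∀ x ∈ Ico 1 b, a * x % b ∈ Ico 1 b := by
    intro x hx
    rw [Finset.mem_Ico] at hx ⊢
    refine ⟨?_, Nat.mod_lt _ hb0⟩
    rcases Nat.eq_zero_or_pos (a * x % b) with h0 | h0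
    · exfalso
      have hdvd : b ∣ x * a := by
        rw [mul_comm]; exact Nat.dvd_iff_mod_eq_zero.2 h0
      have : b ∣ x := (Nat.Coprime.symm hgcd).dvd_of_dvd_mul_right hdvd
      have := Nat.le_of_dvd (by omega) this
      omega
    · exact h0
  have hmemj : ∀ r ∈ Ico 1 b, c * r % b ∈ Ico 1 b := by
    intro r hr
    rw [Finset.mem_Ico] at hr ⊢
    refine ⟨?_, Nat.mod_lt _ hb0⟩
    rcases Nat.eq_zero_or_pos (c * r % b) with h0 | h0
    · exfalso
      have h1 : c * r ≡ 0 [MOD b] := by unfold Nat.ModEq; simpa using h0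
      have h2 : a * (c * r) ≡ a * 0 [MOD b] := h1.mul_left a
      have h3 : a * (c * r) = a * c * r := by ring
      have h4 : a * c * r ≡ 1 * r [MOD b] := hac.mul_right r
      have h5 : r ≡ 0 [MOD b] := by
        calc r = 1 * r := (one_mul r).symm
          _ ≡ a * c * r [MOD b] := h4.symm
          _ = a * (c * r) := h3.symm
          _ ≡ a * 0 [MOD b] := h2
          _ = 0 := by ring
      have : b ∣ r := (Nat.modEq_zero_iff_dvd).1 h5
      have := Nat.le_of_dvd (by omega) this
      omega
    · exact h0
  refine Finset.sum_nbij' (fun x => a * x % b) (fun r => c * r % b) hmemi hmemj ?_ ?_ ?_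
  · intro x hx
    rw [Finset.mem_Ico] at hx
    have h4 : c * (a * x % b) ≡ x [MOD b] := by
      calc c * (a * x % b) ≡ c * (a * x) [MOD b] := (Nat.mod_modEq (a*x) b).mul_left c
        _ = a * c * x := by ring
        _ ≡ 1 * x [MOD b] := hac.mul_right x
        _ = x := one_mul x
    have : _ % b = _ % b := h4
    show c * (a * x % b) % b = x
    rw [this, Nat.mod_eq_of_lt hx.2]
  · intro r hr
    rw [Finset.mem_Ico] at hr
    have h4 : a * (c * r % b) ≡ r [MOD b] := by
      calc a * (c * r % b) ≡ a * (c * r) [MOD b] := (Nat.mod_modEq (c*r) b).mul_left a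
        _ = a * c * r := by ring
        _ ≡ 1 * r [MOD b] := hac.mul_right r
        _ = r := one_mul r
    have : _ % b = _ % b := h4
    show a * (c * r % b) % b = r
    rw [this, Nat.mod_eq_of_lt hr.2]
  · intro x _; rfl

private lemma wssNReqImage (a b : ℕ) (ha : 0 < a) (hb2 : 1 < b) (hgcd : Nat.gcd a b = 1) :
    {n : ℕ | 0 < n ∧ ¬∃ x y : ℕ, n = a * x + b * y}
      = ↑(((((Finset.Ico 1 b) ×ˢ (Finset.Ico 1 a)).filter
            (fun p => b * p.2 < a * p.1)).image (fun p => a * p.1 - b * p.2))) := by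
  have hb0 : 0 < b := by omega
  obtain ⟨c, -, hc⟩ := Nat.exists_mul_mod_eq_one_of_coprime hgcd hb2
  have hac : a * c ≡ 1 [MOD b] := by
    unfold Nat.ModEq; rw [hc, Nat.mod_eq_of_lt hb2]
  ext n
  simp only [Set.mem_setOf_eq, Finset.coe_image, Set.mem_image, Finset.mem_coe,
    Finset.mem_filter, Finset.mem_product, Finset.mem_Ico]
  constructor
  · rintro ⟨hn0, hn⟩
    set x := c * n % b with hxdef
    have hxlt : x < b := Nat.mod_lt _ hb0
    have hxmod : a * x ≡ n [MOD b] := by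
      calc a * (c * n % b) ≡ a * (c * n) [MOD b] := (Nat.mod_modEq (c*n) b).mul_left a
        _ = a * c * n := by ring
        _ ≡ 1 * n [MOD b] := hac.mul_right n
        _ = n := one_mul n
    have hx1 : 1 ≤ x := by
      rcases Nat.eq_zero_or_pos x with h0 | h0
      · exfalso
        have hax : a * x = 0 := by rw [h0, mul_zero]
        have hdvd : b ∣ n := by
          have h' : (0 : ℕ) ≡ n [MOD b] := by rwa [hax] at hxmod
          have := (Nat.modEq_iff_dvd' (Nat.zero_le n)).1 h'
          simpa using this
        exact hn ⟨0, n / b, by rw [Nat.mul_div_cancel' hdvd]; ring⟩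
      · exact h0
    have hlt : n < a * x := by
      by_contra hge
      push_neg at hge
      have hdvd : b ∣ n - a * x := (Nat.modEq_iff_dvd' hge).1 hxmod
      exact hn ⟨x, (n - a * x) / b, by rw [Nat.mul_div_cancel' hdvd]; omega⟩
    have hdvd : b ∣ a * x - n := (Nat.modEq_iff_dvd' (le_of_lt hlt)).1 hxmod.symm
    set z := (a * x - n) / b with hzdef
    have hbz : b * z = a * x - n := Nat.mul_div_cancel' hdvd
    have hz1 : 1 ≤ z := by
      rcases Nat.eq_zero_or_pos z with h0 | h0
      · exfalso; rw [h0, mul_zero] at hbz; omega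
      · exact h0
    have hbzlt : b * z < a * x := by omega
    have hza : z < a := by
      have h1 : a * x < a * b := by nlinarith
      have h2 : z * b < a * b := by
        calc z * b = b * z := mul_comm _ _
          _ < a * x := hbzlt
          _ < a * b := h1
      exact Nat.lt_of_mul_lt_mul_right h2
    exact ⟨⟨x, z⟩, ⟨⟨⟨hx1, hxlt⟩, ⟨hz1, hza⟩⟩, hbzlt⟩, by show a * x - b * z = n; omega⟩
  · rintro ⟨⟨x, z⟩, ⟨⟨⟨hx1, hxlt⟩, ⟨hz1, hza⟩⟩, hbzlt⟩, rfl⟩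
    simp only at hbzlt ⊢
    constructor
    · omega
    · rintro ⟨x', y', hxy⟩
      have hT : b * (y' + z) = b * y' + b * z := by ring
      have key : a * x = a * x' + b * (y' + z) := by omega
      have hby : 0 < b * (y' + z) := by
        have h1 : 1 ≤ y' + z := by omega
        calc 0 < b * 1 := by omega
          _ ≤ b * (y' + z) := Nat.mul_le_mul_left b h1
      have hxx' : x' < x := by
        have : a * x' < a * x := by omega
        exact Nat.lt_of_mul_lt_mul_left this
      have hU : a * (x - x') + a * x' = a * x := by
        rw [← Nat.mul_add]; congr 1; omega
      have hUb : a * (x - x') = b * (y' + z) := by omega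
      have hdvd : b ∣ (x - x') := by
        have h1 : b ∣ (x - x') * a := ⟨y' + z, by rw [mul_comm] at hUb ⊢; omega⟩
        exact (Nat.Coprime.symm hgcd).dvd_of_dvd_mul_right h1
      have := Nat.le_of_dvd (by omega) hdvd
      omega

set_option maxHeartbeats 1000000 in
private lemma wssFinal (A B L M : ℂ) (hL : L - 1 ≠ 0) (hM : M - 1 ≠ 0) (hB : B ≠ 0) :
    A^2/(2*B) * (B^2/(M-1) - 2*M*B/(M-1)^2) - A/2 * (B/(M-1))
      - 1/(2*B) * (B^2/(L-1) - 2*L*B/(L-1)^2) + 1/2 * (B/(L-1))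
    = L/(L-1)^2 + (A-1)*A*B/(2*(M-1)) - A^2*M/(M-1)^2 := by
  obtain ⟨l, rfl⟩ : ∃ l, L = l + 1 := ⟨L - 1, by ring⟩
  obtain ⟨m, rfl⟩ : ∃ m, M = m + 1 := ⟨M - 1, by ring⟩
  simp only [add_sub_cancel_right] at hL hM ⊢
  have e1 : A^2/(2*B) * (B^2/m - 2*(m+1)*B/m^2) = A^2*B/(2*m) - A^2*(m+1)/m^2 := by
    field_simp
  have e2 : (1:ℂ)/(2*B) * (B^2/l - 2*(l+1)*B/l^2) = B/(2*l) - (l+1)/l^2 := by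
    field_simp
  have e3 : A/2 * (B/m) = A*B/(2*m) := by field_simp
  have e4 : (1:ℂ)/2 * (B/l) = B/(2*l) := by field_simp
  have e5 : (A-1)*A*B/(2*m) = A^2*B/(2*m) - A*B/(2*m) := by field_simp
  linear_combination e1 - e2 - e3 + e4 + e5

set_option maxHeartbeats 1000000 in
/-- weighted Sylvester sum in two variables, for `λ ≠ 0`, `λ ≠ 1`, `λ^b = 1`. -/
theorem weighted_sylvester_sum_two_variables_root_of_unity
    (a b : ℕ) (ha : 0 < a) (hb : 0 < b) (hgcd : Nat.gcd a b = 1)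
    (lam : ℂ) (hlam0 : lam ≠ 0) (hlam1 : lam ≠ 1) (hlamb : lam ^ b = 1) :
    ∑ᶠ n ∈ {n : ℕ | 0 < n ∧ ¬∃ x y : ℕ, n = a * x + b * y}, lam ^ n * (n : ℂ) =
      lam / (lam - 1) ^ 2
        + ((a : ℂ) - 1) * (a : ℂ) * (b : ℂ) / (2 * (lam ^ a - 1))
        - (a : ℂ) ^ 2 * lam ^ a / (lam ^ a - 1) ^ 2 := by
  have hb2 : 1 < b := by
    by_contra h
    push_neg at h
    interval_cases b
    · exact hlam1 (by simpa using hlamb)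
  have hb0 : 0 < b := hb
  set μ := lam ^ a with hμdef
  have hμb : μ ^ b = 1 := by rw [hμdef, ← pow_mul, mul_comm, pow_mul, hlamb, one_pow]
  have hμ1 : μ ≠ 1 := by
    intro h
    have h1 : orderOf lam ∣ a := orderOf_dvd_of_pow_eq_one h
    have h2 : orderOf lam ∣ b := orderOf_dvd_of_pow_eq_one hlamb
    have h3 : orderOf lam ∣ 1 := hgcd ▸ Nat.dvd_gcd h1 h2
    exact hlam1 (orderOf_eq_one_iff.1 (Nat.dvd_one.1 h3))
  have hlne : lam - 1 ≠ 0 := sub_ne_zero.2 hlam1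
  have hμne : μ - 1 ≠ 0 := sub_ne_zero.2 hμ1
  have hbC : (b : ℂ) ≠ 0 := Nat.cast_ne_zero.2 (by omega)
  have haC : (a : ℂ) ≠ 0 := Nat.cast_ne_zero.2 (by omega)
  have hbnd : ∀ x : ℕ, 1 ≤ x → x < b → ¬ b ∣ a * x := by
    intro x h1 h2 hdvd
    have hdvd' : b ∣ x * a := by rwa [mul_comm]
    have : b ∣ x := (Nat.Coprime.symm hgcd).dvd_of_dvd_mul_right hdvd'
    have := Nat.le_of_dvd (by omega) this
    omega
  rw [wssNReqImage a b ha hb2 hgcd, finsum_mem_coe_finset]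
  have hinj : ∀ p ∈ (((Finset.Ico 1 b) ×ˢ (Finset.Ico 1 a)).filter
      (fun p : ℕ × ℕ => b * p.2 < a * p.1)),
      ∀ q ∈ (((Finset.Ico 1 b) ×ˢ (Finset.Ico 1 a)).filter
      (fun p : ℕ × ℕ => b * p.2 < a * p.1)),
      (fun p : ℕ × ℕ => a * p.1 - b * p.2) p = (fun p : ℕ × ℕ => a * p.1 - b * p.2) q
        → p = q := by
    have claim : ∀ x z x' z' : ℕ, x < b → x' < b → b * z < a * x → b * z' < a * x' →
        a * x - b * z = a * x' - b * z' → x ≤ x' → x = x' ∧ z = z' := by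
      intro x z x' z' h1 h2 h3 h4 h5 h6
      have key : a * x + b * z' = a * x' + b * z := by omega
      have hax : a * x ≤ a * x' := Nat.mul_le_mul_left a h6
      have hzz : z ≤ z' := by
        have hbz : b * z ≤ b * z' := by omega
        exact Nat.le_of_mul_le_mul_left hbz hb0
      have hU : a * (x' - x) + a * x = a * x' := by
        rw [← Nat.mul_add]; congr 1; omega
      have hV : b * (z' - z) + b * z = b * z' := by
        rw [← Nat.mul_add]; congr 1; omega
      have hUb : a * (x' - x) = b * (z' - z) := by omega
      have hxeq : x = x' := by
        have hdvd : b ∣ (x' - x) := by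
          have hd1 : b ∣ (x' - x) * a := ⟨z' - z, by rw [mul_comm] at hUb ⊢; omega⟩
          exact (Nat.Coprime.symm hgcd).dvd_of_dvd_mul_right hd1
        rcases Nat.eq_zero_or_pos (x' - x) with h0 | h0
        · omega
        · have := Nat.le_of_dvd h0 hdvd; omega
      refine ⟨hxeq, ?_⟩
      have : b * z = b * z' := by rw [hxeq] at key; omega
      exact Nat.eq_of_mul_eq_mul_left hb0 this
    rintro ⟨x, z⟩ hp ⟨x', z'⟩ hq hfe
    simp only [Finset.mem_filter, Finset.mem_product, Finset.mem_Ico] at hp hq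
    simp only at hfe
    rcases le_total x x' with hle | hle
    · obtain ⟨he1, he2⟩ := claim x z x' z' hp.1.1.2 hq.1.1.2 hp.2 hq.2 hfe hle
      simp [he1, he2]
    · obtain ⟨he1, he2⟩ := claim x' z' x z hq.1.1.2 hp.1.1.2 hq.2 hp.2 hfe.symm hle
      simp [he1, he2]
  rw [Finset.sum_image hinj]
  -- Step: rewrite each term
  have hstep1 : ∑ p ∈ (((Finset.Ico 1 b) ×ˢ (Finset.Ico 1 a)).filter
      (fun p : ℕ × ℕ => b * p.2 < a * p.1)),
      lam ^ (a * p.1 - b * p.2) * ((a * p.1 - b * p.2 : ℕ) : ℂ)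
    = ∑ p ∈ (((Finset.Ico 1 b) ×ˢ (Finset.Ico 1 a)).filter
      (fun p : ℕ × ℕ => b * p.2 < a * p.1)),
      lam ^ (a * p.1) * (((a * p.1 : ℕ) : ℂ) - ((b * p.2 : ℕ) : ℂ)) := by
    refine Finset.sum_congr rfl ?_
    rintro ⟨x, z⟩ hp
    simp only [Finset.mem_filter, Finset.mem_product, Finset.mem_Ico] at hp
    have hlt : b * z < a * x := hp.2
    have hpow : lam ^ (a * x - b * z) = lam ^ (a * x) := by
      have h1 : lam ^ (a * x - b * z) * lam ^ (b * z) = lam ^ (a * x) := by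
        rw [← pow_add]; congr 1; omega
      have h2 : lam ^ (b * z) = 1 := by rw [pow_mul, hlamb, one_pow]
      rw [h2, mul_one] at h1
      exact h1
    have hcast : ((a * x - b * z : ℕ) : ℂ) = ((a * x : ℕ) : ℂ) - ((b * z : ℕ) : ℂ) :=
      Nat.cast_sub (le_of_lt hlt)
    simp only
    rw [hpow, hcast]
  rw [hstep1, Finset.sum_filter, Finset.sum_product]
  -- Step: inner sums
  have hstep2 : ∀ x ∈ Finset.Ico 1 b,
      (∑ z ∈ Finset.Ico 1 a, if b * z < a * x then
          lam ^ (a * x) * (((a * x : ℕ) : ℂ) - ((b * z : ℕ) : ℂ)) else 0)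
      = (a:ℂ)^2/(2*(b:ℂ)) * ((x:ℂ)^2 * μ^x) - (a:ℂ)/2 * ((x:ℂ) * μ^x)
        - (1/(2*(b:ℂ))) * (((a*x % b : ℕ):ℂ)^2 * lam^(a*x % b))
        + (1/2) * (((a*x % b : ℕ):ℂ) * lam^(a*x % b)) := by
    intro x hx
    rw [Finset.mem_Ico] at hx
    set m := a * x / b with hmdef
    set r := a * x % b with hrdef
    have hdm : b * m + r = a * x := Nat.div_add_mod (a*x) b
    have hrlt : r < b := Nat.mod_lt _ hb0
    have hfilter : (Finset.Ico 1 a).filter (fun z => b * z < a * x) = Finset.Ico 1 (m+1) := by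
      ext z
      simp only [Finset.mem_filter, Finset.mem_Ico]
      constructor
      · rintro ⟨⟨hz1, _⟩, hzlt⟩
        refine ⟨hz1, ?_⟩
        have : z ≤ m := by
          rw [hmdef, Nat.le_div_iff_mul_le hb0, mul_comm z b]
          omega
        omega
      · rintro ⟨hz1, hzm⟩
        have hzm' : z ≤ m := by omega
        have hzle : z * b ≤ a * x := by
          rw [hmdef] at hzm'
          exact (Nat.le_div_iff_mul_le hb0).1 hzm'
        have hne : b * z ≠ a * x := by
          intro heq
          exact hbnd x hx.1 hx.2 ⟨z, heq.symm⟩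
        have hblt : b * z < a * x := by
          rw [mul_comm] at hzle
          omega
        refine ⟨⟨hz1, ?_⟩, hblt⟩
        have h1 : a * x < a * b := by nlinarith [hx.2, ha]
        have h2 : z * b < a * b := by
          calc z * b = b * z := mul_comm _ _
            _ < a * x := hblt
            _ < a * b := h1
        exact Nat.lt_of_mul_lt_mul_right h2
    rw [← Finset.sum_filter, hfilter]
    have hzsum : ∑ z ∈ Finset.Ico 1 (m+1), (((b * z : ℕ)) : ℂ)
        = (b:ℂ) * (((m:ℂ)+1) * (m:ℂ) / 2) := by
      have hg := wssGauss (m+1)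
      rw [Finset.range_eq_Ico, Finset.sum_eq_sum_Ico_succ_bot (Nat.succ_pos m)] at hg
      push_cast at hg ⊢
      have : ∑ z ∈ Finset.Ico 1 (m+1), ((b:ℂ) * (z:ℂ))
          = (b:ℂ) * ∑ z ∈ Finset.Ico 1 (m+1), (z:ℂ) := by rw [Finset.mul_sum]
      rw [this]
      rw [show ∑ z ∈ Finset.Ico 1 (m+1), (z:ℂ) = ((m:ℂ)+1) * (m:ℂ) / 2 by
        push_cast at hg; linear_combination hg]
    have hconst : ∑ z ∈ Finset.Ico 1 (m+1), (((a * x : ℕ)) : ℂ)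
        = (m:ℂ) * ((a*x : ℕ) : ℂ) := by
      rw [Finset.sum_const, Nat.card_Ico]
      simp [nsmul_eq_mul]
    have hsplit : ∑ z ∈ Finset.Ico 1 (m+1),
        lam ^ (a * x) * (((a * x : ℕ) : ℂ) - ((b * z : ℕ) : ℂ))
        = lam ^ (a*x) * ((m:ℂ) * ((a*x:ℕ):ℂ) - (b:ℂ) * (((m:ℂ)+1) * (m:ℂ) / 2)) := by
      rw [← Finset.mul_sum, Finset.sum_sub_distrib, hzsum, hconst]
    rw [hsplit]
    have hpowμ : lam ^ (a * x) = μ ^ x := by rw [hμdef, ← pow_mul]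
    have hpowr : lam ^ (a * x) = lam ^ r := by
      rw [← hdm, pow_add, pow_mul, hlamb, one_pow, one_mul]
    have hcast : (b:ℂ) * (m:ℂ) + (r:ℂ) = (a:ℂ) * (x:ℂ) := by
      exact_mod_cast congrArg (Nat.cast : ℕ → ℂ) hdm
    have hrc : (r:ℂ) = (a:ℂ) * (x:ℂ) - (b:ℂ) * (m:ℂ) := by linear_combination hcast
    rw [hpowr, ← hpowr, hpowμ, ← hpowμ, hpowr]
    rw [hrc]
    push_cast
    rw [hpowμ] at hpowr
    rw [← hpowr]
    have h2B : (2:ℂ) * (b:ℂ) ≠ 0 := by simp [hbC]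
    field_simp [h2B]
    ring
  rw [Finset.sum_congr rfl hstep2]
  -- Step: split into four sums, reindex, evaluate
  have hsplit4 : ∑ x ∈ Finset.Ico 1 b,
      ((a:ℂ)^2/(2*(b:ℂ)) * ((x:ℂ)^2 * μ^x) - (a:ℂ)/2 * ((x:ℂ) * μ^x)
        - (1/(2*(b:ℂ))) * (((a*x % b : ℕ):ℂ)^2 * lam^(a*x % b))
        + (1/2) * (((a*x % b : ℕ):ℂ) * lam^(a*x % b)))
      = (a:ℂ)^2/(2*(b:ℂ)) * (∑ x ∈ Finset.Ico 1 b, (x:ℂ)^2 * μ^x)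
        - (a:ℂ)/2 * (∑ x ∈ Finset.Ico 1 b, (x:ℂ) * μ^x)
        - (1/(2*(b:ℂ))) * (∑ x ∈ Finset.Ico 1 b, (x:ℂ)^2 * lam^x)
        + (1/2) * (∑ x ∈ Finset.Ico 1 b, (x:ℂ) * lam^x) := by
    rw [Finset.sum_add_distrib, Finset.sum_sub_distrib, Finset.sum_sub_distrib]
    rw [← Finset.mul_sum, ← Finset.mul_sum, ← Finset.mul_sum, ← Finset.mul_sum]
    rw [wssReindex a b hb2 hgcd (fun t => (t:ℂ)^2 * lam^t),
        wssReindex a b hb2 hgcd (fun t => (t:ℂ) * lam^t)]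
  rw [hsplit4]
  have hext : ∀ (G : ℕ → ℂ), G 0 = 0 →
      ∑ x ∈ Finset.Ico 1 b, G x = ∑ x ∈ Finset.range b, G x := by
    intro G hG
    rw [Finset.range_eq_Ico, Finset.sum_eq_sum_Ico_succ_bot hb0, hG, zero_add]
  rw [hext (fun x => (x:ℂ)^2 * μ^x) (by simp),
      hext (fun x => (x:ℂ) * μ^x) (by simp),
      hext (fun x => (x:ℂ)^2 * lam^x) (by simp),
      hext (fun x => (x:ℂ) * lam^x) (by simp)]
  rw [wssSumQ hμ1 hμb, wssSumP hμ1 hμb, wssSumQ hlam1 hlamb, wssSumP hlam1 hlamb]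
  exact wssFinal (a:ℂ) (b:ℂ) lam μ hlne hμne hbC
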